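/- A finite group G is an elementary abelian 2-group if and only if the set of maximal sum-free sets in G coincides with the set of complements of the maximal subgroups of G, and the Frattini subgroup of G is trivial. -/

import Mathlib

/-- A subset `S` of a group is sum-free if for all `s₁, s₂ ∈ S`, `s₁ * s₂ ∉ S`. -/
def SumFree {G : Type*} [Group G] (S : Set G) : Prop :=
  ∀ a ∈ S, ∀ b ∈ S, a * b ∉ S

/-- A maximal sum-free set: a (nonempty) sum-free set of maximum cardinality
among all sum-free subsets. -/
def IsMaxSumFree {G : Type*} [Group G] (S : Set G) : Prop :=
  S.Nonempty ∧ SumFree S ∧ ∀ T : Set G, SumFree T → T.ncard ≤ S.ncard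

section Aux

open Pointwise

variable {G : Type*} [Group G]

/-- The subgroup `{1, a}` for an involution `a`. -/
private def pairSubgroup (a : G) (hcomm : ∀ x y : G, x * y = y * x)
    (ha : a * a = 1) : Subgroup G where
  carrier := {1, a}
  one_mem' := Or.inl rfl
  mul_mem' := by
    rintro x y (rfl | rfl) (rfl | rfl) <;>
      simp_all [Set.mem_insert_iff, ha]
  inv_mem' := by
    rintro x (rfl | rfl)
    · simp
    · right
      have : x⁻¹ = x := inv_eq_of_mul_eq_one_right ha
      simp [this]

private lemma pairSubgroup_normal (a : G) (hcomm : ∀ x y : G, x * y = y * x)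
    (ha : a * a = 1) : (pairSubgroup a hcomm ha).Normal :=
  ⟨fun n hn g => by
    have : g * n * g⁻¹ = n := by rw [hcomm g n, mul_assoc, mul_inv_cancel, mul_one]
    rwa [this]⟩

private lemma mem_sup_pair {a g : G} (hcomm : ∀ x y : G, x * y = y * x)
    (ha : a * a = 1) {H : Subgroup G}
    (hg : g ∈ H ⊔ pairSubgroup a hcomm ha) :
    g ∈ H ∨ ∃ h ∈ H, g = h * a := by
  haveI := pairSubgroup_normal a hcomm ha
  have hmn : (↑(H ⊔ pairSubgroup a hcomm ha) : Set G)
      = (↑H : Set G) * (↑(pairSubgroup a hcomm ha) : Set G) :=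
    Subgroup.mul_normal H (pairSubgroup a hcomm ha)
  have hmem : g ∈ (↑H : Set G) * (↑(pairSubgroup a hcomm ha) : Set G) := by
    rw [← hmn]; exact hg
  obtain ⟨h, hh, p, hp, rfl⟩ := hmem
  have hp' : p = 1 ∨ p = a := hp
  rcases hp' with rfl | rfl
  · exact Or.inl (by simpa using hh)
  · exact Or.inr ⟨h, hh, rfl⟩

variable [Finite G]

/-- For a coatom `M` in an abelian exponent-2 group, products of two
non-members lie in `M`. -/
private lemma coatom_prod_mem (hcomm : ∀ x y : G, x * y = y * x)
    (hsq : ∀ g : G, g * g = 1) {M : Subgroup G} (hM : IsCoatom M)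
    {a b : G} (ha : a ∉ M) (hb : b ∉ M) : a * b ∈ M := by
  have hsup : M ⊔ pairSubgroup a hcomm (hsq a) = ⊤ := by
    apply hM.2
    refine lt_of_le_of_ne le_sup_left ?_
    intro h
    apply ha
    rw [h]
    exact Subgroup.mem_sup_right (Or.inr rfl)
  have hbmem : b ∈ M ⊔ pairSubgroup a hcomm (hsq a) := by rw [hsup]; trivial
  rcases mem_sup_pair hcomm (hsq a) hbmem with h | ⟨m, hm, rfl⟩
  · exact absurd h hb
  · have : a * (m * a) = m := by
      rw [← mul_assoc, hcomm a m, mul_assoc, hsq a, mul_one]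
    rw [this]
    exact hm

/-- Any sum-free set occupies at most half the group. -/
private lemma sumfree_two_mul_ncard_le {T : Set G} (hT : SumFree T) :
    2 * T.ncard ≤ Nat.card G := by
  rcases T.eq_empty_or_nonempty with rfl | ⟨a, ha⟩
  · simp
  · have himg : (a * ·) '' T ⊆ Tᶜ := by
      rintro _ ⟨t, ht, rfl⟩
      exact hT a ha t ht
    have h1 : T.ncard = ((a * ·) '' T).ncard :=
      (Set.ncard_image_of_injective T (mul_right_injective a)).symm
    have h2 : ((a * ·) '' T).ncard ≤ Tᶜ.ncard :=
      Set.ncard_le_ncard himg (Set.toFinite _)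
    have h3 : T.ncard + Tᶜ.ncard = Nat.card G := Set.ncard_add_ncard_compl T
    omega

/-- A coatom's complement has exactly half the group's cardinality. -/
private lemma coatom_compl_ncard (hcomm : ∀ x y : G, x * y = y * x)
    (hsq : ∀ g : G, g * g = 1) {M : Subgroup G} (hM : IsCoatom M) :
    2 * ((↑M : Set G)ᶜ).ncard = Nat.card G := by
  obtain ⟨x, hx⟩ : ∃ x : G, x ∉ M := by
    by_contra h
    push_neg at h
    exact hM.1 ((Subgroup.eq_top_iff' M).2 h)
  have himg : (x * ·) '' (↑M : Set G) = (↑M : Set G)ᶜ := by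
    ext y
    constructor
    · rintro ⟨m, hm, rfl⟩
      intro hmem
      exact hx (by simpa using mul_mem hmem (inv_mem hm))
    · intro hy
      refine ⟨x * y, coatom_prod_mem hcomm hsq hM hx hy, ?_⟩
      simp only [← mul_assoc, hsq x, one_mul]
  have h1 : ((↑M : Set G)ᶜ).ncard = (↑M : Set G).ncard := by
    rw [← himg, Set.ncard_image_of_injective _ (mul_right_injective x)]
  have h2 : (↑M : Set G).ncard + ((↑M : Set G)ᶜ).ncard = Nat.card G :=
    Set.ncard_add_ncard_compl _
  omega

/-- The complement of a coatom is a maximal sum-free set. -/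
private lemma coatom_compl_isMaxSumFree (hcomm : ∀ x y : G, x * y = y * x)
    (hsq : ∀ g : G, g * g = 1) {M : Subgroup G} (hM : IsCoatom M) :
    IsMaxSumFree ((↑M : Set G)ᶜ) := by
  refine ⟨?_, ?_, ?_⟩
  · by_contra h
    rw [Set.not_nonempty_iff_eq_empty] at h
    have huniv : (↑M : Set G) = Set.univ := by
      rw [← compl_compl (↑M : Set G), h, Set.compl_empty]
    exact hM.1 ((Subgroup.eq_top_iff' M).2 fun x => Set.eq_univ_iff_forall.1 huniv x)
  · intro a ha b hb hab
    exact hab (coatom_prod_mem hcomm hsq hM ha hb)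
  · intro T hT
    have h1 := sumfree_two_mul_ncard_le hT
    have h2 := coatom_compl_ncard hcomm hsq hM
    omega

end Aux

theorem elementary_abelian_two_characterisation (G : Type*) [Group G] [Finite G] :
    (∀ g : G, g ≠ 1 → orderOf g = 2) ↔
      ({S : Set G | IsMaxSumFree S} =
          {S : Set G | ∃ M : Subgroup G, IsCoatom M ∧ S = (↑M : Set G)ᶜ} ∧
        (⨅ M ∈ {M : Subgroup G | IsCoatom M}, M) = ⊥) := by
  constructor
  · -- Forward direction
    intro h
    have hsq : ∀ g : G, g * g = 1 := by
      intro g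
      by_cases hg : g = 1
      · simp [hg]
      · have := pow_orderOf_eq_one g
        rwa [h g hg, pow_two] at this
    have hcomm : ∀ x y : G, x * y = y * x := by
      intro x y
      have h1 : (x * y)⁻¹ = x * y := inv_eq_of_mul_eq_one_right (hsq (x * y))
      calc x * y = (x * y)⁻¹ := h1.symm
        _ = y⁻¹ * x⁻¹ := mul_inv_rev x y
        _ = y * x := by
            rw [inv_eq_of_mul_eq_one_right (hsq x), inv_eq_of_mul_eq_one_right (hsq y)]
    constructor
    · -- set equality
      ext S
      simp only [Set.mem_setOf_eq]
      constructor
      · -- max sum-free → complement of coatom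
        rintro ⟨⟨a, haS⟩, hSF, hmax⟩
        -- G is nontrivial
        have ha1 : a ≠ 1 := by
          rintro rfl
          exact hSF 1 haS 1 haS (by simpa using haS)
        -- there exists a coatom
        obtain ⟨M₀, hM₀, -⟩ : ∃ M : Subgroup G, IsCoatom M ∧ ⊥ ≤ M := by
          rcases eq_top_or_exists_le_coatom (⊥ : Subgroup G) with hbt | h
          · exfalso
            exact ha1 (Subgroup.mem_bot.1 (hbt ▸ Subgroup.mem_top a))
          · exact h
        -- S has exactly half the group's size
        have hS2 : 2 * S.ncard = Nat.card G := by
          have h1 := sumfree_two_mul_ncard_le hSF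
          have h2 := coatom_compl_ncard hcomm hsq hM₀
          have h3 : ((↑M₀ : Set G)ᶜ).ncard ≤ S.ncard :=
            hmax _ fun x hx y hy hxy =>
              hxy (coatom_prod_mem hcomm hsq hM₀ hx hy)
          omega
        have hScompl : Sᶜ.ncard = S.ncard := by
          have := Set.ncard_add_ncard_compl S
          omega
        -- a * S = Sᶜ
        have himg : (a * ·) '' S = Sᶜ := by
          have hsub : (a * ·) '' S ⊆ Sᶜ := by
            rintro _ ⟨t, ht, rfl⟩
            exact hSF a haS t ht
          refine (Set.eq_of_subset_of_ncard_le hsub ?_ (Set.toFinite _))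
          rw [Set.ncard_image_of_injective _ (mul_right_injective a), hScompl]
        -- Sᶜ is a subgroup
        have hone : (1 : G) ∉ S := fun h1 => hSF 1 h1 1 h1 (by simpa using h1)
        have hmul : ∀ {x y : G}, x ∈ Sᶜ → y ∈ Sᶜ → x * y ∈ Sᶜ := by
          intro x y hx hy
          rw [← himg] at hx hy
          obtain ⟨s1, hs1, rfl⟩ := hx
          obtain ⟨s2, hs2, rfl⟩ := hy
          have heq : a * s1 * (a * s2) = s1 * s2 := by
            rw [hcomm a s1, mul_assoc, ← mul_assoc a a s2, hsq a, one_mul]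
          show a * s1 * (a * s2) ∈ Sᶜ
          rw [heq]
          exact hSF s1 hs1 s2 hs2
        have hinv : ∀ {x : G}, x ∈ Sᶜ → x⁻¹ ∈ Sᶜ := by
          intro x hx
          have hxx : x⁻¹ = x := inv_eq_of_mul_eq_one_right (hsq x)
          rwa [hxx]
        refine ⟨{ carrier := Sᶜ
                  one_mem' := hone
                  mul_mem' := fun hx hy => hmul hx hy
                  inv_mem' := fun hx => hinv hx }, ⟨?_, ?_⟩, (compl_compl S).symm⟩
        · -- ≠ ⊤
          intro htop
          have haH : a ∈ (⊤ : Subgroup G) := trivial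
          rw [← htop] at haH
          exact haH haS
        · -- maximality of the subgroup
          intro K hK
          obtain ⟨x, hxK, hxS⟩ : ∃ x, x ∈ K ∧ x ∈ S := by
            obtain ⟨x, hxK, hxH⟩ := SetLike.exists_of_lt hK
            exact ⟨x, hxK, by simpa using not_not.1 fun h => hxH h⟩
          rw [Subgroup.eq_top_iff']
          intro g
          by_cases hg : g ∈ S
          · have hxg : x * g ∈ K := hK.le (hSF x hxS g hg)
            have hcalc : x * (x * g) = g := by rw [← mul_assoc, hsq x, one_mul]
            rw [← hcalc]
            exact mul_mem hxK hxg
          · exact hK.le hg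
      · -- complement of coatom → max sum-free
        rintro ⟨M, hM, rfl⟩
        exact coatom_compl_isMaxSumFree hcomm hsq hM
    · -- Frattini subgroup is trivial
      rw [eq_bot_iff]
      intro g hg
      rw [Subgroup.mem_bot]
      by_contra hg1
      -- find a subgroup maximal among those not containing g
      have hfin : ({K : Subgroup G | g ∉ K}).Finite := Set.toFinite _
      obtain ⟨H, hH, hHmax⟩ : ∃ H ∈ {K : Subgroup G | g ∉ K},
          ∀ K ∈ {K : Subgroup G | g ∉ K}, id H ≤ id K → id H = id K := by
        obtain ⟨H, hH, hm⟩ := Set.Finite.exists_maximalFor id _ hfin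
          ⟨⊥, fun h => hg1 (Subgroup.mem_bot.1 h)⟩
        exact ⟨H, hH, fun K hK hle => le_antisymm hle (hm hK hle)⟩
      simp only [id] at hHmax
      have hHco : IsCoatom H := by
        constructor
        · intro htop
          exact hH (htop ▸ Subgroup.mem_top g)
        · intro K hHK
          have hgK : g ∈ K := by
            by_contra hgK
            exact hHK.ne (hHmax K hgK hHK.le)
          rw [Subgroup.eq_top_iff']
          intro x
          by_cases hx : x ∈ H
          · exact hHK.le hx
          · have hlt : g ∈ H ⊔ pairSubgroup x hcomm (hsq x) := by
              by_contra hgs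
              have heq := hHmax _ hgs le_sup_left
              exact hx (heq ▸ Subgroup.mem_sup_right (Or.inr rfl) :
                x ∈ H)
            rcases mem_sup_pair hcomm (hsq x) hlt with h | ⟨m, hm, hgm⟩
            · exact absurd h hH
            · have : x = m⁻¹ * g := by rw [hgm, ← mul_assoc, inv_mul_cancel, one_mul]
              rw [this]
              exact mul_mem (inv_mem (hHK.le hm)) hgK
      have : g ∈ H := by
        have hle : (⨅ M ∈ {M : Subgroup G | IsCoatom M}, M) ≤ H :=
          biInf_le _ hHco
        exact hle hg
      exact hH this
  · -- Reverse direction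
    rintro ⟨hset, hfr⟩ g hg1
    have hsq : g * g = 1 := by
      have : g * g ∈ (⨅ M ∈ {M : Subgroup G | IsCoatom M}, M) := by
        rw [Subgroup.mem_iInf]
        intro M
        rw [Subgroup.mem_iInf]
        intro hM
        by_cases hgM : g ∈ M
        · exact mul_mem hgM hgM
        · have hMS : IsMaxSumFree ((↑M : Set G)ᶜ) := by
            have : ((↑M : Set G)ᶜ) ∈ {S : Set G | ∃ M : Subgroup G,
                IsCoatom M ∧ S = (↑M : Set G)ᶜ} := ⟨M, hM, rfl⟩
            rw [← hset] at this
            exact this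
          have hSF := hMS.2.1
          by_contra hgg
          exact hSF g hgM g hgM hgg
      rw [hfr] at this
      exact Subgroup.mem_bot.1 this
    have : g ^ 2 = 1 := by rw [pow_two]; exact hsq
    exact orderOf_eq_prime this hg1
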